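/- arXiv:2009.02508 — 2 statements merged into one kernel-verified Lean document; each statement's English description precedes it below -/
import Mathlib

section
/- Under the assumptions 2n_j < N_j (j = 1,2), Ψ(ζ_ℓ) > 0 for all ℓ, and c_k the moments of a positive Φ_o, the dual functional J_ν(Q) = (1/|N|) Σ_{ℓ∈Z²_N} (1/(ν−1)) Ψ(ζ_ℓ)/Q(ζ_ℓ)^{ν−1} + Σ_{k∈Λ} q_k c_k (for integer 1 < ν < ∞) attains a unique minimizer over the open set of trigonometric polynomials Q with coefficient support Λ that are strictly positive on the grid Z²_N. -/
lemma aux_geom {r : ℂ} {N : ℕ} (hr : r ≠ 1) (hN : r ^ N = 1) :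
    ∑ ℓ ∈ Finset.range N, r ^ ℓ = 0 := by
  rw [geom_sum_eq hr, hN, sub_self, zero_div]

lemma aux_ortho {N : ℕ} (hN : 0 < N) {m : ℤ} (hm' : m.natAbs < N) :
    ∑ ℓ ∈ Finset.range N, Complex.exp (Complex.I * m * ℓ * (2 * Real.pi / N)) =
      if m = 0 then (N : ℂ) else 0 := by
  have hNC : (N : ℂ) ≠ 0 := Nat.cast_ne_zero.2 hN.ne'
  split_ifs with h
  · subst h; simp
  · have key : ∀ ℓ : ℕ, Complex.exp (Complex.I * m * ℓ * (2 * Real.pi / N)) =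
        Complex.exp (Complex.I * m * (2 * Real.pi / N)) ^ ℓ := by
      intro ℓ
      rw [← Complex.exp_nat_mul]
      congr 1
      ring
    rw [Finset.sum_congr rfl fun ℓ _ => key ℓ]
    apply aux_geom
    · intro hone
      rw [Complex.exp_eq_one_iff] at hone
      obtain ⟨n, hn⟩ := hone
      have hπ : (Real.pi : ℂ) ≠ 0 := by exact_mod_cast Real.pi_ne_zero
      have h2πI : ((2:ℂ) * Real.pi * Complex.I) ≠ 0 := by
        simp [hπ, Complex.I_ne_zero]
      have hmn : (m : ℂ) = n * N := by
        have h2 : (m : ℂ) * ((2:ℂ) * Real.pi * Complex.I) =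
            ((n : ℂ) * N) * ((2:ℂ) * Real.pi * Complex.I) := by
          field_simp at hn
          linear_combination (2 * (Real.pi:ℂ) * Complex.I) * hn
        exact mul_right_cancel₀ h2πI h2
      have hm2 : m = n * N := by exact_mod_cast hmn
      have hn0 : n ≠ 0 := by rintro rfl; simp at hm2; exact h hm2
      have : N ≤ m.natAbs := by
        rw [hm2, Int.natAbs_mul, Int.natAbs_natCast]
        have : 1 ≤ n.natAbs := by omega
        nlinarith
      omega
    · rw [← Complex.exp_nat_mul]
      have : (N : ℂ) * (Complex.I * m * (2 * Real.pi / N)) =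
          m * (2 * Real.pi * Complex.I) := by
        field_simp
      rw [this, Complex.exp_int_mul_two_pi_mul_I]

lemma aux_inv_le {n : ℕ} (hn : n ≠ 0) {a b : ℝ} (ha : 0 < a) (hb : 0 < b) :
    1 / ((a + b) / 2) ^ n ≤ (1 / a ^ n + 1 / b ^ n) / 2 := by
  rcases eq_or_ne a b with rfl | hab
  · have : (a + a) / 2 = a := by ring
    rw [this]; linarith
  · have h := (strictConvexOn_zpow (m := -(n : ℤ)) (by omega) (by omega)).2
      (Set.mem_Ioi.2 ha) (Set.mem_Ioi.2 hb) hab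
      (by norm_num : (0:ℝ) < 1/2) (by norm_num : (0:ℝ) < 1/2) (by norm_num)
    simp only [smul_eq_mul, zpow_neg, zpow_natCast] at h
    have e : (1:ℝ)/2 * a + 1/2 * b = (a + b) / 2 := by ring
    rw [e] at h
    rw [one_div, one_div, one_div]
    linarith

lemma aux_inv_lt {n : ℕ} (hn : n ≠ 0) {a b : ℝ} (ha : 0 < a) (hb : 0 < b) (hab : a ≠ b) :
    1 / ((a + b) / 2) ^ n < (1 / a ^ n + 1 / b ^ n) / 2 := by
  have h := (strictConvexOn_zpow (m := -(n : ℤ)) (by omega) (by omega)).2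
    (Set.mem_Ioi.2 ha) (Set.mem_Ioi.2 hb) hab
    (by norm_num : (0:ℝ) < 1/2) (by norm_num : (0:ℝ) < 1/2) (by norm_num)
  simp only [smul_eq_mul, zpow_neg, zpow_natCast] at h
  have e : (1:ℝ)/2 * a + 1/2 * b = (a + b) / 2 := by ring
  rw [e] at h
  rw [one_div, one_div, one_div]
  linarith

/-- The dual functional `J_ν` attains a unique minimizer over `B₊(N)`, the open set of
trigonometric polynomials with coefficient support `Λ` that are strictly positive on
the grid. -/
theorem stmt11 (n₁ n₂ N₁ N₂ : ℕ) (h₁ : 2 * n₁ < N₁) (h₂ : 2 * n₂ < N₂)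
    (ν : ℕ) (hν : 1 < ν)
    (ζ : ℤ × ℤ → ℕ × ℕ → ℂ)
    (hζ : ∀ k ℓ, ζ k ℓ =
      Complex.exp (Complex.I * (k.1 : ℂ) * (ℓ.1 : ℂ) * (2 * Real.pi / N₁)) *
      Complex.exp (Complex.I * (k.2 : ℂ) * (ℓ.2 : ℂ) * (2 * Real.pi / N₂)))
    (Φo : ℕ × ℕ → ℝ) (hΦo : ∀ ℓ ∈ Finset.range N₁ ×ˢ Finset.range N₂, 0 < Φo ℓ)
    (Ψ : ℕ × ℕ → ℝ) (hΨ : ∀ ℓ ∈ Finset.range N₁ ×ˢ Finset.range N₂, 0 < Ψ ℓ)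
    (c : ℤ × ℤ → ℝ)
    (hc : ∀ k, (c k : ℂ) = (1 / ((N₁ : ℂ) * (N₂ : ℂ))) *
      ∑ ℓ ∈ Finset.range N₁ ×ˢ Finset.range N₂, ζ k ℓ * (Φo ℓ : ℂ))
    (Qv : (ℤ × ℤ → ℝ) → ℕ × ℕ → ℝ)
    (hQv : ∀ q ℓ, Qv q ℓ =
      (∑ k ∈ Finset.Icc (-(n₁ : ℤ)) (n₁ : ℤ) ×ˢ Finset.Icc (-(n₂ : ℤ)) (n₂ : ℤ),
        (q k : ℂ) * ζ k ℓ).re)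
    (B : Set (ℤ × ℤ → ℝ))
    (hB : B = {q | (∀ k, q k = q (-k)) ∧
      (∀ k ∉ Finset.Icc (-(n₁ : ℤ)) (n₁ : ℤ) ×ˢ Finset.Icc (-(n₂ : ℤ)) (n₂ : ℤ), q k = 0) ∧
      ∀ ℓ ∈ Finset.range N₁ ×ˢ Finset.range N₂, 0 < Qv q ℓ})
    (J : (ℤ × ℤ → ℝ) → ℝ)
    (hJ : ∀ q, J q = (1 / ((N₁ : ℝ) * (N₂ : ℝ))) *
        ∑ ℓ ∈ Finset.range N₁ ×ˢ Finset.range N₂,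
          (1 / ((ν : ℝ) - 1)) * Ψ ℓ / Qv q ℓ ^ (ν - 1)
      + ∑ k ∈ Finset.Icc (-(n₁ : ℤ)) (n₁ : ℤ) ×ˢ Finset.Icc (-(n₂ : ℤ)) (n₂ : ℤ),
          q k * c k) :
    ∃! q : ℤ × ℤ → ℝ, q ∈ B ∧ ∀ q' ∈ B, J q ≤ J q' := by
  have hN₁ : 0 < N₁ := by omega
  have hN₂ : 0 < N₂ := by omega
  have hνR : (0:ℝ) < (ν:ℝ) - 1 := by
    have h2 : (2:ℝ) ≤ (ν:ℝ) := by exact_mod_cast hν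
    linarith
  have hνn : 1 ≤ ν - 1 := by omega
  have hνn0 : ν - 1 ≠ 0 := by omega
  set Λ : Finset (ℤ × ℤ) :=
    Finset.Icc (-(n₁ : ℤ)) (n₁ : ℤ) ×ˢ Finset.Icc (-(n₂ : ℤ)) (n₂ : ℤ) with hΛ
  set G : Finset (ℕ × ℕ) := Finset.range N₁ ×ˢ Finset.range N₂ with hGdef
  have hNR : (0:ℝ) < (N₁ : ℝ) * (N₂ : ℝ) := by positivity
  have hNC : ((N₁ : ℂ) * (N₂ : ℂ)) ≠ 0 :=
    mul_ne_zero (Nat.cast_ne_zero.2 hN₁.ne') (Nat.cast_ne_zero.2 hN₂.ne')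
  have hBiff : ∀ q, q ∈ B ↔ ((∀ k, q k = q (-k)) ∧ (∀ k ∉ Λ, q k = 0) ∧
      ∀ ℓ ∈ G, 0 < Qv q ℓ) := fun q => by rw [hB]; exact Iff.rfl
  have hGne : G.Nonempty := ⟨(0,0), by
    simp only [hGdef, Finset.mem_product, Finset.mem_range]; exact ⟨hN₁, hN₂⟩⟩
  -- basic facts about ζ
  have hζadd : ∀ a b : ℤ × ℤ, ∀ ℓ, ζ (a + b) ℓ = ζ a ℓ * ζ b ℓ := by
    intro a b ℓ
    rw [hζ, hζ, hζ]
    simp only [← Complex.exp_add]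
    congr 1
    simp only [Prod.fst_add, Prod.snd_add]
    push_cast
    ring
  have hζzero : ∀ ℓ, ζ 0 ℓ = 1 := by intro ℓ; rw [hζ]; simp
  have hζabs : ∀ k ℓ, ‖ζ k ℓ‖ = 1 := by
    intro k ℓ
    rw [hζ, norm_mul]
    have e1 : Complex.I * (k.1 : ℂ) * (ℓ.1 : ℂ) * (2 * Real.pi / N₁)
        = ((k.1 * ℓ.1 * (2 * Real.pi / N₁) : ℝ) : ℂ) * Complex.I := by push_cast; ring
    have e2 : Complex.I * (k.2 : ℂ) * (ℓ.2 : ℂ) * (2 * Real.pi / N₂)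
        = ((k.2 * ℓ.2 * (2 * Real.pi / N₂) : ℝ) : ℂ) * Complex.I := by push_cast; ring
    rw [e1, e2, Complex.norm_exp_ofReal_mul_I, Complex.norm_exp_ofReal_mul_I, mul_one]
  have hζne : ∀ k ℓ, ζ k ℓ ≠ 0 := by
    intro k ℓ h
    have := hζabs k ℓ
    rw [h] at this; simp at this
  have hζconj : ∀ k ℓ, (starRingEnd ℂ) (ζ k ℓ) = ζ (-k) ℓ := by
    intro k ℓ
    have h1 : ζ k ℓ * ζ (-k) ℓ = 1 := by
      rw [← hζadd]; simp [hζzero]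
    have h2 : ζ k ℓ * (starRingEnd ℂ) (ζ k ℓ) = 1 := by
      rw [Complex.mul_conj]
      rw [Complex.normSq_eq_norm_sq, hζabs]
      norm_num
    exact mul_left_cancel₀ (hζne k ℓ) (h2.trans h1.symm)
  -- orthogonality on the grid
  have hGsum : ∀ m : ℤ × ℤ, m.1.natAbs < N₁ → m.2.natAbs < N₂ →
      ∑ ℓ ∈ G, ζ m ℓ = if m = 0 then ((N₁ : ℂ) * N₂) else 0 := by
    intro m hm1 hm2
    have e : ∑ ℓ ∈ G, ζ m ℓ =
        (∑ ℓ₁ ∈ Finset.range N₁, Complex.exp (Complex.I * m.1 * ℓ₁ * (2*Real.pi/N₁))) *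
        (∑ ℓ₂ ∈ Finset.range N₂, Complex.exp (Complex.I * m.2 * ℓ₂ * (2*Real.pi/N₂))) := by
      rw [Finset.sum_mul_sum, hGdef, Finset.sum_product]
      exact Finset.sum_congr rfl fun ℓ₁ _ => Finset.sum_congr rfl fun ℓ₂ _ => hζ m (ℓ₁, ℓ₂)
    rw [e, aux_ortho hN₁ hm1, aux_ortho hN₂ hm2]
    by_cases hx : m.1 = 0 <;> by_cases hy : m.2 = 0 <;>
      simp [hx, hy, Prod.ext_iff]
  have hortho : ∀ k ∈ Λ, ∀ k' ∈ Λ, ∑ ℓ ∈ G, ζ k' ℓ * ζ (-k) ℓ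
      = if k' = k then ((N₁ : ℂ) * N₂) else 0 := by
    intro k hk k' hk'
    have e : ∀ ℓ, ζ k' ℓ * ζ (-k) ℓ = ζ (k' + -k) ℓ := fun ℓ => (hζadd _ _ ℓ).symm
    rw [Finset.sum_congr rfl fun ℓ _ => e ℓ]
    simp only [hΛ, Finset.mem_product, Finset.mem_Icc] at hk hk'
    have h1 : (k' + -k).1.natAbs < N₁ := by
      simp only [Prod.fst_add, Prod.fst_neg]; omega
    have h2 : (k' + -k).2.natAbs < N₂ := by
      simp only [Prod.snd_add, Prod.snd_neg]; omega
    rw [hGsum _ h1 h2]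
    simp [add_neg_eq_zero]
  -- reality of the trigonometric polynomial for symmetric coefficients
  have hreal : ∀ q : ℤ × ℤ → ℝ, (∀ k, q k = q (-k)) → ∀ ℓ,
      ((Qv q ℓ : ℝ) : ℂ) = ∑ k ∈ Λ, (q k : ℂ) * ζ k ℓ := by
    intro q hsym ℓ
    have hconjS : (starRingEnd ℂ) (∑ k ∈ Λ, (q k : ℂ) * ζ k ℓ)
        = ∑ k ∈ Λ, (q k : ℂ) * ζ k ℓ := by
      rw [map_sum]
      refine Finset.sum_equiv (Equiv.neg (ℤ × ℤ)) (fun k => ?_) (fun k hk => ?_)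
      · simp only [hΛ, Equiv.neg_apply, Finset.mem_product, Finset.mem_Icc,
          Prod.fst_neg, Prod.snd_neg]
        omega
      · rw [map_mul, Complex.conj_ofReal, hζconj, Equiv.neg_apply, hsym k]
    have him : (∑ k ∈ Λ, (q k : ℂ) * ζ k ℓ).im = 0 := Complex.conj_eq_iff_im.mp hconjS
    rw [hQv]
    exact Complex.ext (by simp) (by simp [him])
  -- Fourier inversion
  have hinv : ∀ q : ℤ × ℤ → ℝ, (∀ k, q k = q (-k)) → ∀ k ∈ Λ,
      (q k : ℂ) * ((N₁ : ℂ) * N₂) = ∑ ℓ ∈ G, ((Qv q ℓ : ℝ) : ℂ) * ζ (-k) ℓ := by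
    intro q hsym k hk
    have e1 : ∑ ℓ ∈ G, ((Qv q ℓ : ℝ) : ℂ) * ζ (-k) ℓ
        = ∑ ℓ ∈ G, (∑ k' ∈ Λ, (q k' : ℂ) * ζ k' ℓ) * ζ (-k) ℓ :=
      Finset.sum_congr rfl fun ℓ _ => by rw [hreal q hsym ℓ]
    have e2 : ∑ ℓ ∈ G, (∑ k' ∈ Λ, (q k' : ℂ) * ζ k' ℓ) * ζ (-k) ℓ
        = ∑ k' ∈ Λ, (q k' : ℂ) * ∑ ℓ ∈ G, ζ k' ℓ * ζ (-k) ℓ := by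
      simp only [Finset.sum_mul, Finset.mul_sum]
      rw [Finset.sum_comm]
      exact Finset.sum_congr rfl fun k' _ => Finset.sum_congr rfl fun ℓ _ => by ring
    have e3 : ∑ k' ∈ Λ, (q k' : ℂ) * ∑ ℓ ∈ G, ζ k' ℓ * ζ (-k) ℓ
        = (q k : ℂ) * ((N₁ : ℂ) * N₂) := by
      rw [Finset.sum_congr rfl fun k' hk' => by rw [hortho k hk k' hk']]
      rw [Finset.sum_congr rfl fun k' (_ : k' ∈ Λ) => (mul_ite _ _ _ _)]
      simp only [mul_zero]
      rw [Finset.sum_ite_eq' Λ k (fun k' => (q k' : ℂ) * ((N₁ : ℂ) * N₂)), if_pos hk]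
    rw [e1, e2, e3]
  -- Parseval for the linear term
  have hPars : ∀ q : ℤ × ℤ → ℝ, (∀ k, q k = q (-k)) →
      ∑ k ∈ Λ, q k * c k = 1 / ((N₁:ℝ) * N₂) * ∑ ℓ ∈ G, Qv q ℓ * Φo ℓ := by
    intro q hsym
    have key : ((∑ k ∈ Λ, q k * c k : ℝ) : ℂ)
        = ((1 / ((N₁:ℝ) * N₂) * ∑ ℓ ∈ G, Qv q ℓ * Φo ℓ : ℝ) : ℂ) := by
      push_cast
      calc ∑ k ∈ Λ, (q k : ℂ) * (c k : ℂ)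
          = ∑ k ∈ Λ, (q k:ℂ) * ((1 / ((N₁:ℂ)*N₂)) * ∑ ℓ ∈ G, ζ k ℓ * (Φo ℓ:ℂ)) :=
            Finset.sum_congr rfl fun k _ => by rw [hc k]
        _ = (1 / ((N₁:ℂ)*N₂)) * ∑ ℓ ∈ G, (∑ k ∈ Λ, (q k:ℂ) * ζ k ℓ) * (Φo ℓ:ℂ) := by
            simp only [Finset.mul_sum, Finset.sum_mul]
            rw [Finset.sum_comm]
            exact Finset.sum_congr rfl fun k _ => Finset.sum_congr rfl fun ℓ _ => by ring
        _ = (1 / ((N₁:ℂ)*N₂)) * ∑ ℓ ∈ G, ((Qv q ℓ : ℝ):ℂ) * (Φo ℓ:ℂ) := by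
            congr 1
            exact Finset.sum_congr rfl fun ℓ _ => by rw [hreal q hsym ℓ]
    exact_mod_cast key
  -- real formula for Qv and consequences
  have hQvre : ∀ q ℓ, Qv q ℓ = ∑ k ∈ Λ, q k * (ζ k ℓ).re := by
    intro q ℓ
    rw [hQv, Complex.re_sum]
    exact Finset.sum_congr rfl fun k _ => Complex.re_ofReal_mul _ _
  have hQvcont : ∀ ℓ, Continuous fun q : ℤ × ℤ → ℝ => Qv q ℓ := by
    intro ℓ
    have e : (fun q : ℤ × ℤ → ℝ => Qv q ℓ) = fun q => ∑ k ∈ Λ, q k * (ζ k ℓ).re :=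
      funext fun q => hQvre q ℓ
    rw [e]
    exact continuous_finset_sum _ fun k _ => (continuous_apply k).mul continuous_const
  have hQvmid : ∀ q q' : ℤ × ℤ → ℝ, ∀ ℓ,
      Qv (fun k => (q k + q' k) / 2) ℓ = (Qv q ℓ + Qv q' ℓ) / 2 := by
    intro q q' ℓ
    simp only [hQvre]
    rw [← Finset.sum_add_distrib, Finset.sum_div]
    exact Finset.sum_congr rfl fun k _ => by ring
  -- the reference point q₀
  set q₀ : ℤ × ℤ → ℝ := fun k => if k = 0 then 1 else 0 with hq₀
  have h0Λ : (0 : ℤ × ℤ) ∈ Λ := by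
    simp only [hΛ, Finset.mem_product, Finset.mem_Icc, Prod.fst_zero, Prod.snd_zero]
    omega
  have hq₀Qv : ∀ ℓ, Qv q₀ ℓ = 1 := by
    intro ℓ
    rw [hQv]
    have e : ∀ k ∈ Λ, ((q₀ k : ℝ) : ℂ) * ζ k ℓ = if k = 0 then ζ k ℓ else 0 := by
      intro k _; by_cases h : k = 0 <;> simp [hq₀, h]
    rw [Finset.sum_congr rfl e, Finset.sum_ite_eq' Λ 0 (fun k => ζ k ℓ), if_pos h0Λ,
      hζzero, Complex.one_re]
  have hq₀sym : ∀ k : ℤ × ℤ, q₀ k = q₀ (-k) := by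
    intro k; simp [hq₀, neg_eq_zero]
  have hq₀B : q₀ ∈ B := by
    refine (hBiff q₀).2 ⟨hq₀sym, fun k hk => ?_, fun ℓ _ => by rw [hq₀Qv]; norm_num⟩
    have hk0 : k ≠ 0 := by rintro rfl; exact hk h0Λ
    simp [hq₀, hk0]
  -- positivity of J on B, J₀
  set J₀ : ℝ := J q₀ with hJ₀def
  have hq₀lin : 0 ≤ ∑ k ∈ Λ, q₀ k * c k := by
    rw [hPars q₀ hq₀sym]
    refine mul_nonneg (by positivity) (Finset.sum_nonneg fun ℓ hℓ => ?_)
    rw [hq₀Qv, one_mul]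
    exact le_of_lt (hΦo ℓ hℓ)
  have hJ₀pos : 0 < J₀ := by
    have h1 : 0 < (1 / ((N₁:ℝ) * N₂)) * ∑ ℓ ∈ G, 1/((ν:ℝ)-1) * Ψ ℓ / Qv q₀ ℓ ^ (ν-1) := by
      refine mul_pos (by positivity) (Finset.sum_pos (fun ℓ hℓ => ?_) hGne)
      exact div_pos (mul_pos (one_div_pos.2 hνR) (hΨ ℓ hℓ))
        (pow_pos (by rw [hq₀Qv]; norm_num) _)
    have h2 := hJ q₀
    rw [hJ₀def]
    rw [h2]
    have : 0 ≤ ∑ k ∈ Λ, q₀ k * c k := hq₀lin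
    linarith
  -- constants for the compact sublevel set
  set Mb : ℕ × ℕ → ℝ := fun ℓ => (N₁:ℝ) * N₂ * J₀ / Φo ℓ with hMbdef
  set M : ℝ := max 1 (1/((N₁:ℝ) * N₂) * ∑ ℓ ∈ G, Mb ℓ) with hMdef
  set δ : ℕ × ℕ → ℝ := fun ℓ => min 1 (Ψ ℓ / (((ν:ℝ)-1) * ((N₁:ℝ) * N₂) * J₀)) with hδdef
  have hδpos : ∀ ℓ ∈ G, 0 < δ ℓ := fun ℓ hℓ =>
    lt_min one_pos (div_pos (hΨ ℓ hℓ)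
      (mul_pos (mul_pos hνR hNR) hJ₀pos))
  have hδle1 : ∀ ℓ, δ ℓ ≤ 1 := fun ℓ => min_le_left _ _
  -- sublevel set bounds
  have hsub : ∀ q ∈ B, J q ≤ J₀ → (∀ k, |q k| ≤ M) ∧ ∀ ℓ ∈ G, δ ℓ ≤ Qv q ℓ ∧ Qv q ℓ ≤ Mb ℓ := by
    intro q hqB hle
    obtain ⟨hsym, hsupp, hpos⟩ := (hBiff q).1 hqB
    have htpos : ∀ ℓ ∈ G, 0 < 1/((ν:ℝ)-1) * Ψ ℓ / Qv q ℓ ^ (ν-1) := fun ℓ hℓ =>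
      div_pos (mul_pos (one_div_pos.2 hνR) (hΨ ℓ hℓ))
        (pow_pos (hpos ℓ hℓ) _)
    have hT2 : ∑ k ∈ Λ, q k * c k = 1/((N₁:ℝ) * N₂) * ∑ ℓ ∈ G, Qv q ℓ * Φo ℓ :=
      hPars q hsym
    have hT2pos : 0 ≤ ∑ k ∈ Λ, q k * c k := by
      rw [hT2]
      exact mul_nonneg (by positivity) (Finset.sum_nonneg fun ℓ hℓ =>
        le_of_lt (mul_pos (hpos ℓ hℓ) (hΦo ℓ hℓ)))
    have hT1pos : 0 ≤ (1 / ((N₁:ℝ) * N₂)) * ∑ ℓ ∈ G, 1/((ν:ℝ)-1) * Ψ ℓ / Qv q ℓ ^ (ν-1) :=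
      le_of_lt (mul_pos (by positivity) (Finset.sum_pos htpos hGne))
    have hJq := hJ q
    -- upper bounds on Qv
    have hub : ∀ ℓ ∈ G, Qv q ℓ ≤ Mb ℓ := by
      intro ℓ hℓ
      have h1 : 1/((N₁:ℝ) * N₂) * ∑ ℓ' ∈ G, Qv q ℓ' * Φo ℓ' ≤ J₀ := by
        rw [← hT2]; linarith
      have h2 : ∑ ℓ' ∈ G, Qv q ℓ' * Φo ℓ' ≤ (N₁:ℝ) * N₂ * J₀ := by
        rw [one_div, inv_mul_le_iff₀ hNR] at h1
        linarith [h1]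
      have h3 : Qv q ℓ * Φo ℓ ≤ ∑ ℓ' ∈ G, Qv q ℓ' * Φo ℓ' :=
        Finset.single_le_sum (f := fun ℓ' => Qv q ℓ' * Φo ℓ') (fun ℓ' hℓ' =>
          le_of_lt (mul_pos (hpos _ hℓ') (hΦo _ hℓ'))) hℓ
      have hΦℓ := hΦo ℓ hℓ
      rw [hMbdef]
      rw [le_div_iff₀ hΦℓ]
      linarith
    -- lower bounds on Qv
    have hlb : ∀ ℓ ∈ G, δ ℓ ≤ Qv q ℓ := by
      intro ℓ hℓ
      have h1 : 1/((ν:ℝ)-1) * Ψ ℓ / Qv q ℓ ^ (ν-1)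
          ≤ ∑ ℓ' ∈ G, 1/((ν:ℝ)-1) * Ψ ℓ' / Qv q ℓ' ^ (ν-1) :=
        Finset.single_le_sum (fun ℓ' h => le_of_lt (htpos ℓ' h)) hℓ
      have h2 : ∑ ℓ' ∈ G, 1/((ν:ℝ)-1) * Ψ ℓ' / Qv q ℓ' ^ (ν-1) ≤ (N₁:ℝ) * N₂ * J₀ := by
        have h2a : 1/((N₁:ℝ) * N₂) * ∑ ℓ' ∈ G, 1/((ν:ℝ)-1) * Ψ ℓ' / Qv q ℓ' ^ (ν-1) ≤ J₀ := by
          linarith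
        rw [one_div, inv_mul_le_iff₀ hNR] at h2a
        linarith
      have hqp : 0 < Qv q ℓ ^ (ν-1) := pow_pos (hpos ℓ hℓ) _
      have h4 : 1/((ν:ℝ)-1) * Ψ ℓ / Qv q ℓ ^ (ν-1) ≤ (N₁:ℝ) * N₂ * J₀ := le_trans h1 h2
      rw [div_le_iff₀ hqp] at h4
      have h3 : Ψ ℓ / (((ν:ℝ)-1) * ((N₁:ℝ) * N₂) * J₀) ≤ Qv q ℓ ^ (ν-1) := by
        rw [div_le_iff₀ (mul_pos (mul_pos hνR hNR) hJ₀pos)]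
        calc Ψ ℓ = ((ν:ℝ)-1) * (1/((ν:ℝ)-1) * Ψ ℓ) := by field_simp
          _ ≤ ((ν:ℝ)-1) * ((N₁:ℝ) * N₂ * J₀ * Qv q ℓ ^ (ν-1)) :=
              mul_le_mul_of_nonneg_left h4 (le_of_lt hνR)
          _ = Qv q ℓ ^ (ν-1) * (((ν:ℝ)-1) * ((N₁:ℝ) * N₂) * J₀) := by ring
      by_cases hc1 : 1 ≤ Qv q ℓ
      · exact le_trans (hδle1 ℓ) hc1
      · push_neg at hc1
        have h5 : Qv q ℓ ^ (ν-1) ≤ Qv q ℓ := by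
          calc Qv q ℓ ^ (ν-1) ≤ Qv q ℓ ^ 1 :=
                pow_le_pow_of_le_one (le_of_lt (hpos ℓ hℓ)) (le_of_lt hc1) hνn
            _ = Qv q ℓ := pow_one _
        exact le_trans (min_le_right _ _) (le_trans h3 h5)
    refine ⟨?_, fun ℓ hℓ => ⟨hlb ℓ hℓ, hub ℓ hℓ⟩⟩
    intro k
    by_cases hk : k ∈ Λ
    · have hi := hinv q hsym k hk
      have habs : |q k| * ((N₁:ℝ) * N₂) ≤ ∑ ℓ ∈ G, Qv q ℓ := by
        have ha1 : ‖(q k : ℂ) * ((N₁:ℂ) * N₂)‖ = |q k| * ((N₁:ℝ) * N₂) := by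
          rw [norm_mul, norm_mul, Complex.norm_real, Real.norm_eq_abs, Complex.norm_natCast, Complex.norm_natCast]
        have ha2 : ‖∑ ℓ ∈ G, ((Qv q ℓ : ℝ):ℂ) * ζ (-k) ℓ‖ ≤ ∑ ℓ ∈ G, Qv q ℓ := by
          refine le_trans (norm_sum_le _ _) (Finset.sum_le_sum fun ℓ hℓ => ?_)
          rw [norm_mul, Complex.norm_real, Real.norm_eq_abs, hζabs, mul_one, abs_of_pos (hpos ℓ hℓ)]
        calc |q k| * ((N₁:ℝ) * N₂) = ‖(q k : ℂ) * ((N₁:ℂ) * N₂)‖ := ha1.symm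
          _ = ‖∑ ℓ ∈ G, ((Qv q ℓ : ℝ):ℂ) * ζ (-k) ℓ‖ := by rw [hi]
          _ ≤ ∑ ℓ ∈ G, Qv q ℓ := ha2
      have hsumle : ∑ ℓ ∈ G, Qv q ℓ ≤ ∑ ℓ ∈ G, Mb ℓ :=
        Finset.sum_le_sum fun ℓ hℓ => hub ℓ hℓ
      have h6 : |q k| ≤ (∑ ℓ ∈ G, Mb ℓ) / ((N₁:ℝ) * N₂) := by
        rw [le_div_iff₀ hNR]
        linarith
      rw [hMdef]
      refine le_max_of_le_right ?_
      calc |q k| ≤ (∑ ℓ ∈ G, Mb ℓ) / ((N₁:ℝ) * N₂) := h6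
        _ = 1/((N₁:ℝ) * N₂) * ∑ ℓ ∈ G, Mb ℓ := by ring
    · rw [hsupp k hk, abs_zero, hMdef]
      exact le_max_of_le_left zero_le_one
  -- the compact set K
  set K : Set (ℤ × ℤ → ℝ) := {q | (∀ k, q k = q (-k)) ∧ (∀ k ∉ Λ, q k = 0) ∧
      (∀ k, |q k| ≤ M) ∧ ∀ ℓ ∈ G, δ ℓ ≤ Qv q ℓ} with hKdef
  have hKmem : ∀ q, q ∈ K ↔ ((∀ k, q k = q (-k)) ∧ (∀ k ∉ Λ, q k = 0) ∧
      (∀ k, |q k| ≤ M) ∧ ∀ ℓ ∈ G, δ ℓ ≤ Qv q ℓ) := fun q => by rw [hKdef]; exact Iff.rfl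
  have hKB : K ⊆ B := by
    intro q hq
    obtain ⟨ha, hb, hcq, hd⟩ := (hKmem q).1 hq
    exact (hBiff q).2 ⟨ha, hb, fun ℓ hℓ => lt_of_lt_of_le (hδpos ℓ hℓ) (hd ℓ hℓ)⟩
  have hM1 : (1:ℝ) ≤ M := by rw [hMdef]; exact le_max_left _ _
  have hq₀K : q₀ ∈ K := by
    refine (hKmem q₀).2 ⟨hq₀sym, fun k hk => ?_, fun k => ?_, fun ℓ hℓ => by
      rw [hq₀Qv]; exact hδle1 ℓ⟩
    · have hk0 : k ≠ 0 := by rintro rfl; exact hk h0Λ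
      simp [hq₀, hk0]
    · by_cases h : k = 0 <;> simp [hq₀, h] <;> linarith
  have hKclosed : IsClosed K := by
    have e : K = (⋂ k, {q : ℤ × ℤ → ℝ | q k = q (-k)}) ∩
        ((⋂ k, {q : ℤ × ℤ → ℝ | k ∉ Λ → q k = 0}) ∩
        ((⋂ k, {q : ℤ × ℤ → ℝ | |q k| ≤ M}) ∩
        (⋂ ℓ, {q : ℤ × ℤ → ℝ | ℓ ∈ G → δ ℓ ≤ Qv q ℓ}))) := by
      ext q
      simp only [hKdef, Set.mem_setOf_eq, Set.mem_inter_iff, Set.mem_iInter]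
    rw [e]
    refine IsClosed.inter (isClosed_iInter fun k =>
      isClosed_eq (continuous_apply k) (continuous_apply (-k)))
      (IsClosed.inter ?_ (IsClosed.inter ?_ ?_))
    · refine isClosed_iInter fun k => ?_
      by_cases hk : k ∈ Λ
      · have e2 : {q : ℤ × ℤ → ℝ | k ∉ Λ → q k = 0} = Set.univ := by
          ext q; simp [hk]
        rw [e2]; exact isClosed_univ
      · have e2 : {q : ℤ × ℤ → ℝ | k ∉ Λ → q k = 0} = {q : ℤ × ℤ → ℝ | q k = 0} := by
          ext q; simp [hk]
        rw [e2]; exact isClosed_eq (continuous_apply k) continuous_const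
    · exact isClosed_iInter fun k =>
        isClosed_le ((continuous_apply k).abs) continuous_const
    · refine isClosed_iInter fun ℓ => ?_
      by_cases hℓ : ℓ ∈ G
      · have e2 : {q : ℤ × ℤ → ℝ | ℓ ∈ G → δ ℓ ≤ Qv q ℓ}
            = {q : ℤ × ℤ → ℝ | δ ℓ ≤ Qv q ℓ} := by ext q; simp [hℓ]
        rw [e2]; exact isClosed_le continuous_const (hQvcont ℓ)
      · have e2 : {q : ℤ × ℤ → ℝ | ℓ ∈ G → δ ℓ ≤ Qv q ℓ} = Set.univ := by
          ext q; simp [hℓ]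
        rw [e2]; exact isClosed_univ
  have hKcompact : IsCompact K := by
    refine IsCompact.of_isClosed_subset
      (isCompact_univ_pi fun k : ℤ × ℤ => isCompact_Icc (a := -M) (b := M)) hKclosed ?_
    intro q hq
    rw [Set.mem_univ_pi]
    intro k
    exact Set.mem_Icc.2 (abs_le.1 (((hKmem q).1 hq).2.2.1 k))
  -- continuity of J on K
  have hJcont : ContinuousOn J K := by
    have hconc : ContinuousOn (fun q : ℤ × ℤ → ℝ => (1 / ((N₁:ℝ) * N₂)) *
        ∑ ℓ ∈ G, 1/((ν:ℝ)-1) * Ψ ℓ / Qv q ℓ ^ (ν-1) + ∑ k ∈ Λ, q k * c k) K := by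
      refine ContinuousOn.add (ContinuousOn.mul continuousOn_const ?_)
        (continuous_finset_sum _ fun k _ =>
          (continuous_apply k).mul continuous_const).continuousOn
      refine continuousOn_finset_sum _ fun ℓ hℓ => ?_
      refine ContinuousOn.div continuousOn_const ((hQvcont ℓ).continuousOn.pow _) ?_
      intro q hq
      exact pow_ne_zero _ (ne_of_gt (lt_of_lt_of_le (hδpos ℓ hℓ)
        (((hKmem q).1 hq).2.2.2 ℓ hℓ)))
    exact ContinuousOn.congr hconc fun q _ => hJ q
  -- existence of the minimizer
  obtain ⟨qm, hqmK, hqmmin⟩ := hKcompact.exists_isMinOn ⟨q₀, hq₀K⟩ hJcont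
  have hqmB : qm ∈ B := hKB hqmK
  have hmin : ∀ q' ∈ B, J qm ≤ J q' := by
    intro q' hq'
    by_cases hcase : J q' ≤ J₀
    · have hK' : q' ∈ K := by
        obtain ⟨hs1, hs2, _⟩ := (hBiff q').1 hq'
        obtain ⟨hco, hlu⟩ := hsub q' hq' hcase
        exact (hKmem q').2 ⟨hs1, hs2, hco, fun ℓ hℓ => (hlu ℓ hℓ).1⟩
      exact isMinOn_iff.mp hqmmin q' hK'
    · push_neg at hcase
      exact le_trans (isMinOn_iff.mp hqmmin q₀ hq₀K) (le_of_lt hcase)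
  refine ⟨qm, ⟨hqmB, hmin⟩, ?_⟩
  rintro y ⟨hyB, hymin⟩
  by_contra hne
  have hJeq : J y = J qm := le_antisymm (hymin qm hqmB) (hmin y hyB)
  obtain ⟨hsy, hsupy, hposy⟩ := (hBiff y).1 hyB
  obtain ⟨hsm, hsupm, hposm⟩ := (hBiff qm).1 hqmB
  have hQdiff : ∃ ℓ ∈ G, Qv y ℓ ≠ Qv qm ℓ := by
    by_contra hall
    push_neg at hall
    apply hne
    funext k
    by_cases hk : k ∈ Λ
    · have h1 := hinv y hsy k hk
      have h2 := hinv qm hsm k hk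
      have h3 : ((y k : ℝ):ℂ) * ((N₁:ℂ) * N₂) = ((qm k : ℝ):ℂ) * ((N₁:ℂ) * N₂) := by
        rw [h1, h2]
        exact Finset.sum_congr rfl fun ℓ hℓ => by rw [hall ℓ hℓ]
      have h4 := mul_right_cancel₀ hNC h3
      exact_mod_cast h4
    · rw [hsupy k hk, hsupm k hk]
  obtain ⟨ℓ₀, hℓ₀G, hℓ₀⟩ := hQdiff
  set w : ℤ × ℤ → ℝ := fun k => (y k + qm k) / 2 with hwdef
  have hwB : w ∈ B := by
    refine (hBiff w).2 ⟨fun k => ?_, fun k hk => ?_, fun ℓ hℓ => ?_⟩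
    · simp only [hwdef]; rw [hsy k, hsm k]
    · simp only [hwdef]; rw [hsupy k hk, hsupm k hk]; ring
    · rw [hwdef, hQvmid y qm ℓ]
      have := hposy ℓ hℓ
      have := hposm ℓ hℓ
      linarith
  have hlt : J w < J qm := by
    have hlin : ∑ k ∈ Λ, w k * c k
        = (∑ k ∈ Λ, y k * c k + ∑ k ∈ Λ, qm k * c k) / 2 := by
      rw [← Finset.sum_add_distrib, Finset.sum_div]
      exact Finset.sum_congr rfl fun k _ => by simp only [hwdef]; ring
    have hterm_le : ∀ ℓ ∈ G, 1/((ν:ℝ)-1) * Ψ ℓ / Qv w ℓ ^ (ν-1)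
        ≤ (1/((ν:ℝ)-1) * Ψ ℓ / Qv y ℓ ^ (ν-1)
          + 1/((ν:ℝ)-1) * Ψ ℓ / Qv qm ℓ ^ (ν-1)) / 2 := by
      intro ℓ hℓ
      have ha := hposy ℓ hℓ
      have hb := hposm ℓ hℓ
      have hC : 0 ≤ 1/((ν:ℝ)-1) * Ψ ℓ :=
        le_of_lt (mul_pos (one_div_pos.2 hνR) (hΨ ℓ hℓ))
      have hQw : Qv w ℓ = (Qv y ℓ + Qv qm ℓ) / 2 := by rw [hwdef, hQvmid]
      have hconv := aux_inv_le hνn0 ha hb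
      calc 1/((ν:ℝ)-1) * Ψ ℓ / Qv w ℓ ^ (ν-1)
          = 1/((ν:ℝ)-1) * Ψ ℓ * (1 / ((Qv y ℓ + Qv qm ℓ)/2) ^ (ν-1)) := by
            rw [hQw]; rw [mul_one_div]
        _ ≤ 1/((ν:ℝ)-1) * Ψ ℓ * ((1 / Qv y ℓ ^ (ν-1) + 1 / Qv qm ℓ ^ (ν-1))/2) :=
            mul_le_mul_of_nonneg_left hconv hC
        _ = (1/((ν:ℝ)-1) * Ψ ℓ / Qv y ℓ ^ (ν-1)
            + 1/((ν:ℝ)-1) * Ψ ℓ / Qv qm ℓ ^ (ν-1)) / 2 := by ring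
    have hterm_lt : 1/((ν:ℝ)-1) * Ψ ℓ₀ / Qv w ℓ₀ ^ (ν-1)
        < (1/((ν:ℝ)-1) * Ψ ℓ₀ / Qv y ℓ₀ ^ (ν-1)
          + 1/((ν:ℝ)-1) * Ψ ℓ₀ / Qv qm ℓ₀ ^ (ν-1)) / 2 := by
      have ha := hposy ℓ₀ hℓ₀G
      have hb := hposm ℓ₀ hℓ₀G
      have hC : 0 < 1/((ν:ℝ)-1) * Ψ ℓ₀ :=
        mul_pos (one_div_pos.2 hνR) (hΨ ℓ₀ hℓ₀G)
      have hQw : Qv w ℓ₀ = (Qv y ℓ₀ + Qv qm ℓ₀) / 2 := by rw [hwdef, hQvmid]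
      have hconv := aux_inv_lt hνn0 ha hb hℓ₀
      calc 1/((ν:ℝ)-1) * Ψ ℓ₀ / Qv w ℓ₀ ^ (ν-1)
          = 1/((ν:ℝ)-1) * Ψ ℓ₀ * (1 / ((Qv y ℓ₀ + Qv qm ℓ₀)/2) ^ (ν-1)) := by
            rw [hQw]; rw [mul_one_div]
        _ < 1/((ν:ℝ)-1) * Ψ ℓ₀ * ((1 / Qv y ℓ₀ ^ (ν-1) + 1 / Qv qm ℓ₀ ^ (ν-1))/2) :=
            (mul_lt_mul_iff_right₀ hC).2 hconv
        _ = (1/((ν:ℝ)-1) * Ψ ℓ₀ / Qv y ℓ₀ ^ (ν-1)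
            + 1/((ν:ℝ)-1) * Ψ ℓ₀ / Qv qm ℓ₀ ^ (ν-1)) / 2 := by ring
    have hsumlt : ∑ ℓ ∈ G, 1/((ν:ℝ)-1) * Ψ ℓ / Qv w ℓ ^ (ν-1)
        < (∑ ℓ ∈ G, 1/((ν:ℝ)-1) * Ψ ℓ / Qv y ℓ ^ (ν-1)
          + ∑ ℓ ∈ G, 1/((ν:ℝ)-1) * Ψ ℓ / Qv qm ℓ ^ (ν-1)) / 2 := by
      have h := Finset.sum_lt_sum hterm_le ⟨ℓ₀, hℓ₀G, hterm_lt⟩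
      rw [← Finset.sum_div, Finset.sum_add_distrib] at h
      exact h
    have hJw := hJ w
    have hJy := hJ y
    have hJm := hJ qm
    have hmul := mul_lt_mul_of_pos_left hsumlt (show (0:ℝ) < 1 / ((N₁:ℝ) * N₂) by positivity)
    rw [hJw, hJm]
    rw [hJy, hJm] at hJeq
    rw [hlin]
    linarith
  have := hymin w hwB
  rw [hJeq] at this
  linarith
end

section
/- Under the assumptions 2n_j < N_j, Ψ > 0 on the grid, and c_k the moments of a positive Φ_o, the functional J₁(Q) = (1/|N|) Σ_{ℓ∈Z²_N} Ψ(ζ_ℓ) log(Ψ(ζ_ℓ)/Q(ζ_ℓ)) + Σ_{k∈Λ} q_k c_k is strictly convex on B₊(N) and attains a unique minimizer there; moreover Φ(ζ_ℓ) = Ψ(ζ_ℓ)/Q̂(ζ_ℓ), with Q̂ the minimizer, satisfies Φ(ζ_ℓ) > 0 for all ℓ. -/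
open Complex Finset Filter



lemma csum1 (Nn : ℕ) (d : ℤ) (hd : d.natAbs < Nn) :
    ∑ j ∈ Finset.range Nn, Complex.exp (Complex.I * (d : ℂ) * (j : ℂ) * (2 * Real.pi / Nn))
      = if d = 0 then (Nn : ℂ) else 0 := by
  rcases eq_or_ne d 0 with h | h
  · subst h; simp
  · rw [if_neg h]
    have hN0 : (0:ℕ) < Nn := lt_of_le_of_lt (Nat.zero_le _) hd
    have hNc : (Nn : ℂ) ≠ 0 := Nat.cast_ne_zero.mpr hN0.ne'
    set z : ℂ := Complex.exp (Complex.I * (d : ℂ) * (2 * Real.pi / Nn)) with hz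
    have hterm : ∀ j : ℕ, Complex.exp (Complex.I * (d : ℂ) * (j : ℂ) * (2 * Real.pi / Nn)) = z ^ j := by
      intro j
      rw [hz, ← Complex.exp_nat_mul]
      ring_nf
    have hzne : z ≠ 1 := by
      intro hz1
      rw [hz, Complex.exp_eq_one_iff] at hz1
      obtain ⟨n, hn⟩ := hz1
      have h2 : ((d:ℂ)/Nn) * (2*(Real.pi:ℂ)*Complex.I) = (n:ℂ) * (2*(Real.pi:ℂ)*Complex.I) := by
        rw [← hn]; ring
      have hne : (2*(Real.pi:ℂ)*Complex.I) ≠ 0 := by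
        simp [Real.pi_ne_zero, Complex.I_ne_zero]
      have h3 := mul_right_cancel₀ hne h2
      have h4 : (d:ℂ) = (n:ℂ) * (Nn:ℂ) := by
        field_simp at h3
        rw [mul_comm]; exact_mod_cast h3
      have h5 : d = n * (Nn : ℤ) := by exact_mod_cast h4
      rcases eq_or_ne n 0 with hn0 | hn0
      · exact h (by simp [h5, hn0])
      · have : (Nn:ℤ) ≤ |d| := by
          rw [h5, abs_mul]
          have : (1:ℤ) ≤ |n| := Int.one_le_abs hn0
          nlinarith [abs_nonneg (Nn:ℤ), abs_of_nonneg (show (0:ℤ) ≤ (Nn:ℤ) by positivity)]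
        have : (Nn:ℤ) ≤ d.natAbs := by rwa [Int.abs_eq_natAbs] at this
        omega
    have hzN : z ^ Nn = 1 := by
      rw [hz, ← Complex.exp_nat_mul]
      have : (Nn:ℂ) * (Complex.I * (d : ℂ) * (2 * Real.pi / Nn)) = (d:ℂ) * (2 * Real.pi * Complex.I) := by
        field_simp
      rw [this]
      exact_mod_cast Complex.exp_int_mul_two_pi_mul_I d
    calc ∑ j ∈ Finset.range Nn, Complex.exp (Complex.I * (d : ℂ) * (j : ℂ) * (2 * Real.pi / Nn))
        = ∑ j ∈ Finset.range Nn, z ^ j := by exact Finset.sum_congr rfl fun j _ => hterm j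
      _ = (z ^ Nn - 1) / (z - 1) := geom_sum_eq hzne Nn
      _ = 0 := by rw [hzN]; simp

section
variable (n₁ n₂ N₁ N₂ : ℕ) (ζ : ℤ × ℤ → ℕ × ℕ → ℂ)
variable (hζ : ∀ k ℓ, ζ k ℓ =
      Complex.exp (Complex.I * (k.1 : ℂ) * (ℓ.1 : ℂ) * (2 * Real.pi / N₁)) *
      Complex.exp (Complex.I * (k.2 : ℂ) * (ℓ.2 : ℂ) * (2 * Real.pi / N₂)))

include hζ

-- L3 : multiplicativity
lemma zmul (k m : ℤ × ℤ) (ℓ : ℕ × ℕ) : ζ k ℓ * ζ m ℓ = ζ (k + m) ℓ := by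
  simp only [hζ, ← Complex.exp_add, Prod.fst_add, Prod.snd_add]
  congr 1
  push_cast
  ring

-- L4 : conjugation
lemma zconj (k : ℤ × ℤ) (ℓ : ℕ × ℕ) : (starRingEnd ℂ) (ζ k ℓ) = ζ (-k) ℓ := by
  simp only [hζ, map_mul, ← Complex.exp_conj, Prod.fst_neg, Prod.snd_neg]
  congr 2 <;>
  · simp only [map_mul, map_div₀, Complex.conj_I, Complex.conj_ofReal, map_ofNat,
      map_natCast, map_intCast]
    push_cast
    ring

-- norm
lemma znorm (k : ℤ × ℤ) (ℓ : ℕ × ℕ) : ‖ζ k ℓ‖ = 1 := by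
  simp only [hζ, norm_mul]
  rw [show Complex.I * (k.1 : ℂ) * (ℓ.1 : ℂ) * (2 * Real.pi / N₁)
      = ((k.1 : ℝ) * (ℓ.1 : ℝ) * (2 * Real.pi / N₁) : ℝ) * Complex.I by push_cast; ring,
    show Complex.I * (k.2 : ℂ) * (ℓ.2 : ℂ) * (2 * Real.pi / N₂)
      = ((k.2 : ℝ) * (ℓ.2 : ℝ) * (2 * Real.pi / N₂) : ℝ) * Complex.I by push_cast; ring]
  rw [Complex.norm_exp_ofReal_mul_I, Complex.norm_exp_ofReal_mul_I]
  norm_num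

-- L2 : grid sum
lemma csum2 (d : ℤ × ℤ) (hd1 : d.1.natAbs < N₁) (hd2 : d.2.natAbs < N₂) :
    ∑ ℓ ∈ Finset.range N₁ ×ˢ Finset.range N₂, ζ d ℓ
      = if d = 0 then ((N₁ : ℂ) * (N₂ : ℂ)) else 0 := by
  rw [Finset.sum_product]
  have : ∀ ℓ₁ ∈ Finset.range N₁, ∀ ℓ₂ ∈ Finset.range N₂, ζ d (ℓ₁, ℓ₂) =
      Complex.exp (Complex.I * (d.1 : ℂ) * (ℓ₁ : ℂ) * (2 * Real.pi / N₁)) *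
      Complex.exp (Complex.I * (d.2 : ℂ) * (ℓ₂ : ℂ) * (2 * Real.pi / N₂)) := by
    intro _ _ _ _; rw [hζ]
  calc ∑ ℓ₁ ∈ Finset.range N₁, ∑ ℓ₂ ∈ Finset.range N₂, ζ d (ℓ₁, ℓ₂)
      = (∑ ℓ₁ ∈ Finset.range N₁, Complex.exp (Complex.I * (d.1 : ℂ) * (ℓ₁ : ℂ) * (2 * Real.pi / N₁))) *
        (∑ ℓ₂ ∈ Finset.range N₂, Complex.exp (Complex.I * (d.2 : ℂ) * (ℓ₂ : ℂ) * (2 * Real.pi / N₂))) := by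
        rw [Finset.sum_mul_sum]
        exact Finset.sum_congr rfl fun ℓ₁ h₁ => Finset.sum_congr rfl fun ℓ₂ h₂ => this ℓ₁ h₁ ℓ₂ h₂
    _ = (if d.1 = 0 then (N₁:ℂ) else 0) * (if d.2 = 0 then (N₂:ℂ) else 0) := by
        rw [csum1 N₁ d.1 hd1, csum1 N₂ d.2 hd2]
    _ = if d = 0 then ((N₁ : ℂ) * (N₂ : ℂ)) else 0 := by
        rcases eq_or_ne d 0 with h | h
        · simp [h, Prod.fst_zero, Prod.snd_zero]
        · rw [if_neg h]
          by_cases h1 : d.1 = 0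
          · have h2 : d.2 ≠ 0 := fun h2 => h (Prod.ext h1 h2)
            simp [h2]
          · simp [h1]

end

lemma Sreal {n₁ n₂ : ℕ} {ζ : ℤ × ℤ → ℕ × ℕ → ℂ}
    (zconj' : ∀ (k : ℤ × ℤ) (ℓ : ℕ × ℕ), (starRingEnd ℂ) (ζ k ℓ) = ζ (-k) ℓ)
    (q : ℤ × ℤ → ℝ) (hsym : ∀ k, q k = q (-k)) (ℓ : ℕ × ℕ) :
    ((∑ k ∈ Finset.Icc (-(n₁ : ℤ)) (n₁ : ℤ) ×ˢ Finset.Icc (-(n₂ : ℤ)) (n₂ : ℤ),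
        (q k : ℂ) * ζ k ℓ).re : ℂ)
    = ∑ k ∈ Finset.Icc (-(n₁ : ℤ)) (n₁ : ℤ) ×ˢ Finset.Icc (-(n₂ : ℤ)) (n₂ : ℤ),
        (q k : ℂ) * ζ k ℓ := by
  set S := ∑ k ∈ Finset.Icc (-(n₁ : ℤ)) (n₁ : ℤ) ×ˢ Finset.Icc (-(n₂ : ℤ)) (n₂ : ℤ),
      (q k : ℂ) * ζ k ℓ with hS
  have hconj : (starRingEnd ℂ) S = S := by
    calc (starRingEnd ℂ) S
        = ∑ k ∈ Finset.Icc (-(n₁ : ℤ)) (n₁ : ℤ) ×ˢ Finset.Icc (-(n₂ : ℤ)) (n₂ : ℤ),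
            (q (-k) : ℂ) * ζ (-k) ℓ := by
          rw [hS, map_sum]
          refine Finset.sum_congr rfl fun k _ => ?_
          rw [map_mul, zconj' k ℓ, Complex.conj_ofReal, ← hsym k, hsym k]
      _ = S := by
          rw [hS]
          refine Finset.sum_nbij' (fun k => -k) (fun k => -k) ?_ ?_ ?_ ?_ ?_
          · intro a ha
            simp only [Finset.mem_product, Finset.mem_Icc, Prod.fst_neg, Prod.snd_neg] at *
            omega
          · intro a ha
            simp only [Finset.mem_product, Finset.mem_Icc, Prod.fst_neg, Prod.snd_neg] at *
            omega
          · intro a _; simp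
          · intro a _; simp
          · intro a _; rfl
  exact Complex.conj_eq_iff_re.mp hconj

lemma inv1 {n₁ n₂ N₁ N₂ : ℕ} {ζ : ℤ × ℤ → ℕ × ℕ → ℂ}
    (zmul' : ∀ (k m : ℤ × ℤ) (ℓ : ℕ × ℕ), ζ k ℓ * ζ m ℓ = ζ (k + m) ℓ)
    (zconj' : ∀ (k : ℤ × ℤ) (ℓ : ℕ × ℕ), (starRingEnd ℂ) (ζ k ℓ) = ζ (-k) ℓ)
    (csum2' : ∀ (d : ℤ × ℤ), d.1.natAbs < N₁ → d.2.natAbs < N₂ →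
      ∑ ℓ ∈ Finset.range N₁ ×ˢ Finset.range N₂, ζ d ℓ
        = if d = 0 then ((N₁ : ℂ) * (N₂ : ℂ)) else 0)
    (h₁ : 2 * n₁ < N₁) (h₂ : 2 * n₂ < N₂)
    (q : ℤ × ℤ → ℝ) (hsym : ∀ k, q k = q (-k)) (m : ℤ × ℤ)
    (hm : m ∈ Finset.Icc (-(n₁ : ℤ)) (n₁ : ℤ) ×ˢ Finset.Icc (-(n₂ : ℤ)) (n₂ : ℤ)) :
    ∑ ℓ ∈ Finset.range N₁ ×ˢ Finset.range N₂,
      ((∑ k ∈ Finset.Icc (-(n₁ : ℤ)) (n₁ : ℤ) ×ˢ Finset.Icc (-(n₂ : ℤ)) (n₂ : ℤ),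
          (q k : ℂ) * ζ k ℓ).re : ℂ) * ζ (-m) ℓ
    = (q m : ℂ) * ((N₁ : ℂ) * (N₂ : ℂ)) := by
  calc ∑ ℓ ∈ Finset.range N₁ ×ˢ Finset.range N₂,
        ((∑ k ∈ Finset.Icc (-(n₁ : ℤ)) (n₁ : ℤ) ×ˢ Finset.Icc (-(n₂ : ℤ)) (n₂ : ℤ),
          (q k : ℂ) * ζ k ℓ).re : ℂ) * ζ (-m) ℓ
      = ∑ ℓ ∈ Finset.range N₁ ×ˢ Finset.range N₂,
        ∑ k ∈ Finset.Icc (-(n₁ : ℤ)) (n₁ : ℤ) ×ˢ Finset.Icc (-(n₂ : ℤ)) (n₂ : ℤ),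
          (q k : ℂ) * ζ (k + -m) ℓ := by
        refine Finset.sum_congr rfl fun ℓ _ => ?_
        rw [Sreal zconj' q hsym ℓ, Finset.sum_mul]
        exact Finset.sum_congr rfl fun k _ => by rw [mul_assoc, zmul' k (-m) ℓ]
    _ = ∑ k ∈ Finset.Icc (-(n₁ : ℤ)) (n₁ : ℤ) ×ˢ Finset.Icc (-(n₂ : ℤ)) (n₂ : ℤ),
        (q k : ℂ) * ∑ ℓ ∈ Finset.range N₁ ×ˢ Finset.range N₂, ζ (k + -m) ℓ := by
        rw [Finset.sum_comm]
        exact Finset.sum_congr rfl fun k _ => by rw [Finset.mul_sum]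
    _ = ∑ k ∈ Finset.Icc (-(n₁ : ℤ)) (n₁ : ℤ) ×ˢ Finset.Icc (-(n₂ : ℤ)) (n₂ : ℤ),
        (q k : ℂ) * (if k = m then ((N₁ : ℂ) * (N₂ : ℂ)) else 0) := by
        refine Finset.sum_congr rfl fun k hk => ?_
        congr 1
        simp only [Finset.mem_product, Finset.mem_Icc] at hk hm
        rw [csum2' (k + -m)
          (by simp only [Prod.fst_add, Prod.fst_neg]; omega)
          (by simp only [Prod.snd_add, Prod.snd_neg]; omega)]
        simp only [add_neg_eq_zero]
    _ = (q m : ℂ) * ((N₁ : ℂ) * (N₂ : ℂ)) := by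
        rw [Finset.sum_eq_single m (fun k _ hkm => by rw [if_neg hkm, mul_zero])
          (fun hnm => absurd hm hnm)]
        rw [if_pos rfl]

lemma combo_pos {t s x y : ℝ} (ht : 0 ≤ t) (hs : 0 ≤ s) (hts : t + s = 1)
    (hx : 0 < x) (hy : 0 < y) : 0 < t * x + s * y := by
  have hmin : 0 < min x y := lt_min hx hy
  calc (0:ℝ) < min x y := hmin
    _ = (t + s) * min x y := by rw [hts, one_mul]
    _ ≤ t * x + s * y := by
        rw [add_mul]
        exact add_le_add (mul_le_mul_of_nonneg_left (min_le_left _ _) ht)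
          (mul_le_mul_of_nonneg_left (min_le_right _ _) hs)

lemma Hle {a b : ℝ} (ha : 0 < a) (x y t s : ℝ) (hx : 0 < x) (hy : 0 < y)
    (ht : 0 ≤ t) (hs : 0 ≤ s) (hts : t + s = 1) :
    a * Real.log (a / (t * x + s * y)) + b * (t * x + s * y)
      ≤ t * (a * Real.log (a / x) + b * x) + s * (a * Real.log (a / y) + b * y) := by
  have h0 : 0 < t * x + s * y := combo_pos ht hs hts hx hy
  have key : t * Real.log x + s * Real.log y ≤ Real.log (t * x + s * y) := by
    have := (strictConcaveOn_log_Ioi.concaveOn).2 (Set.mem_Ioi.mpr hx) (Set.mem_Ioi.mpr hy) ht hs hts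
    simpa [smul_eq_mul] using this
  rw [Real.log_div ha.ne' h0.ne', Real.log_div ha.ne' hx.ne', Real.log_div ha.ne' hy.ne']
  have hs' : s = 1 - t := by linarith
  subst hs'
  have expand : t * (a * (Real.log a - Real.log x) + b * x)
      + (1 - t) * (a * (Real.log a - Real.log y) + b * y)
      = a * Real.log a - a * (t * Real.log x + (1 - t) * Real.log y)
        + b * (t * x + (1 - t) * y) := by ring
  rw [expand]
  have := mul_le_mul_of_nonneg_left key ha.le
  linarith

lemma Hlt {a b : ℝ} (ha : 0 < a) (x y t s : ℝ) (hx : 0 < x) (hy : 0 < y)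
    (ht : 0 < t) (hs : 0 < s) (hts : t + s = 1) (hxy : x ≠ y) :
    a * Real.log (a / (t * x + s * y)) + b * (t * x + s * y)
      < t * (a * Real.log (a / x) + b * x) + s * (a * Real.log (a / y) + b * y) := by
  have h0 : 0 < t * x + s * y := combo_pos ht.le hs.le hts hx hy
  have key : t * Real.log x + s * Real.log y < Real.log (t * x + s * y) := by
    have := strictConcaveOn_log_Ioi.2 (Set.mem_Ioi.mpr hx) (Set.mem_Ioi.mpr hy) hxy ht hs hts
    simpa [smul_eq_mul] using this
  rw [Real.log_div ha.ne' h0.ne', Real.log_div ha.ne' hx.ne', Real.log_div ha.ne' hy.ne']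
  have hs' : s = 1 - t := by linarith
  subst hs'
  have expand : t * (a * (Real.log a - Real.log x) + b * x)
      + (1 - t) * (a * (Real.log a - Real.log y) + b * y)
      = a * Real.log a - a * (t * Real.log x + (1 - t) * Real.log y)
        + b * (t * x + (1 - t) * y) := by ring
  rw [expand]
  have := mul_lt_mul_of_pos_left key ha
  linarith

lemma Hlb {a b : ℝ} (ha : 0 < a) (hb : 0 < b) {x : ℝ} (hx : 0 < x) :
    a * Real.log b + a ≤ a * Real.log (a / x) + b * x := by
  have key : Real.log (b * x / a) ≤ b * x / a - 1 :=
    Real.log_le_sub_one_of_pos (by positivity)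
  have h2 : Real.log (b * x / a) = Real.log b + Real.log x - Real.log a := by
    rw [Real.log_div (by positivity) ha.ne', Real.log_mul hb.ne' hx.ne']
  rw [Real.log_div ha.ne' hx.ne']
  rw [h2] at key
  have key2 := mul_le_mul_of_nonneg_left key ha.le
  have h3 : a * (b * x / a) = b * x := by field_simp
  nlinarith [key2]

lemma Htop {a b : ℝ} (ha : 0 < a) (hb : 0 < b) :
    Tendsto (fun x => a * Real.log (a / x) + b * x) atTop atTop := by
  have hlo := Real.isLittleO_log_id_atTop.def (show (0:ℝ) < b / (2 * a) by positivity)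
  have hmono : ∀ᶠ x in atTop, a * Real.log a + (b / 2) * x ≤ a * Real.log (a / x) + b * x := by
    filter_upwards [hlo, eventually_gt_atTop (0:ℝ)] with x hx hx0
    rw [Real.log_div ha.ne' hx0.ne']
    have h1 : Real.log x ≤ b / (2 * a) * x := by
      have := hx
      rw [Real.norm_eq_abs, Real.norm_eq_abs, id_eq, abs_of_pos hx0] at this
      exact (le_abs_self _).trans this
    have := mul_le_mul_of_nonneg_left h1 ha.le
    have h4 : a * (b / (2 * a) * x) = (b / 2) * x := by field_simp
    nlinarith
  refine tendsto_atTop_mono' _ hmono ?_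
  exact tendsto_atTop_add_const_left _ _ (tendsto_id.const_mul_atTop (by positivity))

lemma Hzero {a b : ℝ} (ha : 0 < a) (hb : 0 < b) :
    Tendsto (fun x => a * Real.log (a / x) + b * x) (nhdsWithin 0 (Set.Ioi 0)) atTop := by
  have hmono : ∀ᶠ x in nhdsWithin (0:ℝ) (Set.Ioi 0),
      a * Real.log a + -(a * Real.log x) ≤ a * Real.log (a / x) + b * x := by
    filter_upwards [self_mem_nhdsWithin] with x hx
    have hx0 : (0:ℝ) < x := hx
    rw [Real.log_div ha.ne' hx0.ne']
    nlinarith [mul_pos hb hx0]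
  refine tendsto_atTop_mono' _ hmono ?_
  refine tendsto_atTop_add_const_left _ _ ?_
  have h1 : Tendsto (fun x => a * Real.log x) (nhdsWithin (0:ℝ) (Set.Ioi 0)) atBot :=
    Real.tendsto_log_nhdsGT_zero.const_mul_atBot ha
  exact tendsto_neg_atTop_iff.mpr h1

/-- The dual functional `J₁` is strictly convex on `B₊(N)` and attains a unique
minimizer `Q̂` there; moreover `Φ = Ψ/Q̂` is strictly positive on the grid. -/
theorem stmt13 (n₁ n₂ N₁ N₂ : ℕ) (h₁ : 2 * n₁ < N₁) (h₂ : 2 * n₂ < N₂)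
    (ζ : ℤ × ℤ → ℕ × ℕ → ℂ)
    (hζ : ∀ k ℓ, ζ k ℓ =
      Complex.exp (Complex.I * (k.1 : ℂ) * (ℓ.1 : ℂ) * (2 * Real.pi / N₁)) *
      Complex.exp (Complex.I * (k.2 : ℂ) * (ℓ.2 : ℂ) * (2 * Real.pi / N₂)))
    (Φo : ℕ × ℕ → ℝ) (hΦo : ∀ ℓ ∈ Finset.range N₁ ×ˢ Finset.range N₂, 0 < Φo ℓ)
    (Ψ : ℕ × ℕ → ℝ) (hΨ : ∀ ℓ ∈ Finset.range N₁ ×ˢ Finset.range N₂, 0 < Ψ ℓ)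
    (c : ℤ × ℤ → ℝ)
    (hc : ∀ k, (c k : ℂ) = (1 / ((N₁ : ℂ) * (N₂ : ℂ))) *
      ∑ ℓ ∈ Finset.range N₁ ×ˢ Finset.range N₂, ζ k ℓ * (Φo ℓ : ℂ))
    (Qv : (ℤ × ℤ → ℝ) → ℕ × ℕ → ℝ)
    (hQv : ∀ q ℓ, Qv q ℓ =
      (∑ k ∈ Finset.Icc (-(n₁ : ℤ)) (n₁ : ℤ) ×ˢ Finset.Icc (-(n₂ : ℤ)) (n₂ : ℤ),
        (q k : ℂ) * ζ k ℓ).re)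
    (B : Set (ℤ × ℤ → ℝ))
    (hB : B = {q | (∀ k, q k = q (-k)) ∧
      (∀ k ∉ Finset.Icc (-(n₁ : ℤ)) (n₁ : ℤ) ×ˢ Finset.Icc (-(n₂ : ℤ)) (n₂ : ℤ), q k = 0) ∧
      ∀ ℓ ∈ Finset.range N₁ ×ˢ Finset.range N₂, 0 < Qv q ℓ})
    (J : (ℤ × ℤ → ℝ) → ℝ)
    (hJ : ∀ q, J q = (1 / ((N₁ : ℝ) * (N₂ : ℝ))) *
        ∑ ℓ ∈ Finset.range N₁ ×ˢ Finset.range N₂,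
          Ψ ℓ * Real.log (Ψ ℓ / Qv q ℓ)
      + ∑ k ∈ Finset.Icc (-(n₁ : ℤ)) (n₁ : ℤ) ×ˢ Finset.Icc (-(n₂ : ℤ)) (n₂ : ℤ),
          q k * c k) :
    StrictConvexOn ℝ B J ∧
    ∃! q : ℤ × ℤ → ℝ, q ∈ B ∧ (∀ q' ∈ B, J q ≤ J q') ∧
      ∀ ℓ ∈ Finset.range N₁ ×ˢ Finset.range N₂, 0 < Ψ ℓ / Qv q ℓ := by
  have hzm := zmul N₁ N₂ ζ hζ
  have hzc := zconj N₁ N₂ ζ hζ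
  have hzn := znorm N₁ N₂ ζ hζ
  have hcs := csum2 N₁ N₂ ζ hζ
  set Λ : Finset (ℤ × ℤ) :=
    Finset.Icc (-(n₁ : ℤ)) (n₁ : ℤ) ×ˢ Finset.Icc (-(n₂ : ℤ)) (n₂ : ℤ) with hΛ
  set G : Finset (ℕ × ℕ) := Finset.range N₁ ×ˢ Finset.range N₂ with hGdef
  have hN₁ : 0 < N₁ := by omega
  have hN₂ : 0 < N₂ := by omega
  have hNR : (0:ℝ) < (N₁ : ℝ) * (N₂ : ℝ) := by positivity
  have hNRinv : (0:ℝ) < 1 / ((N₁ : ℝ) * (N₂ : ℝ)) := by positivity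
  have hGne : G.Nonempty := ⟨(0, 0), by
    simp only [hGdef, Finset.mem_product, Finset.mem_range]; exact ⟨hN₁, hN₂⟩⟩
  have h0Λ : (0 : ℤ × ℤ) ∈ Λ := by
    simp only [hΛ, Finset.mem_product, Finset.mem_Icc, Prod.fst_zero, Prod.snd_zero]; omega
  -- F1 : Qv is the (real) value of the symbol
  have F1 : ∀ q : ℤ × ℤ → ℝ, (∀ k, q k = q (-k)) → ∀ ℓ,
      ((Qv q ℓ : ℝ) : ℂ) = ∑ k ∈ Λ, (q k : ℂ) * ζ k ℓ := by
    intro q hsym ℓ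
    rw [hQv]
    exact Sreal hzc q hsym ℓ
  -- F2 : inversion
  have F2 : ∀ q : ℤ × ℤ → ℝ, (∀ k, q k = q (-k)) → ∀ m ∈ Λ,
      ∑ ℓ ∈ G, ((Qv q ℓ : ℝ) : ℂ) * ζ (-m) ℓ = (q m : ℂ) * ((N₁ : ℂ) * (N₂ : ℂ)) := by
    intro q hsym m hm
    have := inv1 hzm hzc hcs h₁ h₂ q hsym m hm
    rw [show (∑ ℓ ∈ G, ((Qv q ℓ : ℝ) : ℂ) * ζ (-m) ℓ)
        = ∑ ℓ ∈ G, ((∑ k ∈ Λ, (q k : ℂ) * ζ k ℓ).re : ℂ) * ζ (-m) ℓ from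
      Finset.sum_congr rfl fun ℓ _ => by rw [hQv]]
    exact this
  -- F3 : injectivity on symmetric supported functions
  have F3 : ∀ q q' : ℤ × ℤ → ℝ, (∀ k, q k = q (-k)) → (∀ k ∉ Λ, q k = 0) →
      (∀ k, q' k = q' (-k)) → (∀ k ∉ Λ, q' k = 0) →
      (∀ ℓ ∈ G, Qv q ℓ = Qv q' ℓ) → q = q' := by
    intro q q' hs hsup hs' hsup' heq
    funext m
    by_cases hm : m ∈ Λ
    · have e1 := F2 q hs m hm
      have e2 := F2 q' hs' m hm
      have : (q m : ℂ) * ((N₁ : ℂ) * (N₂ : ℂ)) = (q' m : ℂ) * ((N₁ : ℂ) * (N₂ : ℂ)) := by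
        rw [← e1, ← e2]
        exact Finset.sum_congr rfl fun ℓ hℓ => by rw [heq ℓ hℓ]
      have hNc : ((N₁ : ℂ) * (N₂ : ℂ)) ≠ 0 := by
        simp [Nat.cast_ne_zero, hN₁.ne', hN₂.ne']
      exact_mod_cast mul_right_cancel₀ hNc this
    · rw [hsup m hm, hsup' m hm]
  -- F4 : coefficient bound
  have F4 : ∀ q : ℤ × ℤ → ℝ, (∀ k, q k = q (-k)) → (∀ k ∉ Λ, q k = 0) →
      ∀ R : ℝ, 0 ≤ R → (∀ ℓ ∈ G, |Qv q ℓ| ≤ R) → ∀ k, |q k| ≤ R := by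
    intro q hs hsup R hR0 hQb k
    by_cases hk : k ∈ Λ
    · have e1 := F2 q hs k hk
      have hNc : ((N₁ : ℂ) * (N₂ : ℂ)) ≠ 0 := by
        simp [Nat.cast_ne_zero, hN₁.ne', hN₂.ne']
      have : |q k| * ((N₁ : ℝ) * (N₂ : ℝ)) ≤ R * ((N₁ : ℝ) * (N₂ : ℝ)) := by
        have hnorm : ‖(q k : ℂ) * ((N₁ : ℂ) * (N₂ : ℂ))‖ = |q k| * ((N₁ : ℝ) * (N₂ : ℝ)) := by
          have hcast : ((N₁:ℂ) * (N₂:ℂ)) = ((((N₁:ℝ) * (N₂:ℝ)) : ℝ) : ℂ) := by push_cast; ring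
          rw [norm_mul, hcast, Complex.norm_real, Complex.norm_real, Real.norm_eq_abs,
            Real.norm_eq_abs, abs_of_pos hNR]
        have hb : ‖∑ ℓ ∈ G, ((Qv q ℓ : ℝ) : ℂ) * ζ (-k) ℓ‖ ≤ R * ((N₁ : ℝ) * (N₂ : ℝ)) := by
          calc ‖∑ ℓ ∈ G, ((Qv q ℓ : ℝ) : ℂ) * ζ (-k) ℓ‖
              ≤ ∑ ℓ ∈ G, ‖((Qv q ℓ : ℝ) : ℂ) * ζ (-k) ℓ‖ := norm_sum_le _ _
            _ = ∑ ℓ ∈ G, |Qv q ℓ| := by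
                refine Finset.sum_congr rfl fun ℓ _ => ?_
                rw [norm_mul]
                have : ‖ζ (-k) ℓ‖ = 1 := by
                  exact hzn (-k) ℓ
                rw [this, mul_one, Complex.norm_real, Real.norm_eq_abs]
            _ ≤ ∑ _ℓ ∈ G, R := Finset.sum_le_sum hQb
            _ = R * ((N₁ : ℝ) * (N₂ : ℝ)) := by
                rw [Finset.sum_const, nsmul_eq_mul]
                rw [hGdef, Finset.card_product, Finset.card_range, Finset.card_range]
                push_cast; ring
        rw [← hnorm, ← e1]
        exact hb
      exact le_of_mul_le_mul_right this hNR
    · rw [hsup k hk]; simpa using hR0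
  -- F5 : linearity of Qv
  have F5 : ∀ (a b : ℝ) (q q' : ℤ × ℤ → ℝ) (ℓ : ℕ × ℕ),
      Qv (a • q + b • q') ℓ = a * Qv q ℓ + b * Qv q' ℓ := by
    intro a b q q' ℓ
    rw [hQv, hQv, hQv]
    have : ∀ k ∈ Λ, (((a • q + b • q') k : ℝ) : ℂ) * ζ k ℓ
        = (a : ℂ) * ((q k : ℂ) * ζ k ℓ) + (b : ℂ) * ((q' k : ℂ) * ζ k ℓ) := by
      intro k _
      simp only [Pi.add_apply, Pi.smul_apply, smul_eq_mul]
      push_cast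
      ring
    rw [Finset.sum_congr rfl this, Finset.sum_add_distrib, ← Finset.mul_sum, ← Finset.mul_sum]
    rw [Complex.add_re, Complex.re_ofReal_mul, Complex.re_ofReal_mul]
  -- key : rewrite of the linear term
  have key : ∀ q : ℤ × ℤ → ℝ, (∀ k, q k = q (-k)) →
      ∑ k ∈ Λ, q k * c k = (1 / ((N₁ : ℝ) * (N₂ : ℝ))) * ∑ ℓ ∈ G, Φo ℓ * Qv q ℓ := by
    intro q hsym
    have hC : ((∑ k ∈ Λ, q k * c k : ℝ) : ℂ)
        = (1 / ((N₁ : ℂ) * (N₂ : ℂ))) * ∑ ℓ ∈ G, ((Φo ℓ : ℝ) : ℂ) * ((Qv q ℓ : ℝ) : ℂ) := by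
      push_cast
      calc ∑ k ∈ Λ, (q k : ℂ) * (c k : ℂ)
          = ∑ k ∈ Λ, (1 / ((N₁ : ℂ) * (N₂ : ℂ))) *
              ∑ ℓ ∈ G, (q k : ℂ) * (ζ k ℓ * (Φo ℓ : ℂ)) := by
            refine Finset.sum_congr rfl fun k _ => ?_
            rw [hc k, mul_left_comm]
            congr 1
            rw [Finset.mul_sum]
        _ = (1 / ((N₁ : ℂ) * (N₂ : ℂ))) * ∑ ℓ ∈ G, (Φo ℓ : ℂ) * ∑ k ∈ Λ, (q k : ℂ) * ζ k ℓ := by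
            rw [← Finset.mul_sum, Finset.sum_comm]
            congr 1
            refine Finset.sum_congr rfl fun ℓ _ => ?_
            rw [Finset.mul_sum]
            exact Finset.sum_congr rfl fun k _ => by ring
        _ = (1 / ((N₁ : ℂ) * (N₂ : ℂ))) * ∑ ℓ ∈ G, (Φo ℓ : ℂ) * ((Qv q ℓ : ℝ) : ℂ) := by
            congr 1
            exact Finset.sum_congr rfl fun ℓ _ => by rw [F1 q hsym ℓ]
    have hgoal : ((∑ k ∈ Λ, q k * c k : ℝ) : ℂ)
        = (((1 / ((N₁ : ℝ) * (N₂ : ℝ))) * ∑ ℓ ∈ G, Φo ℓ * Qv q ℓ : ℝ) : ℂ) := by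
      rw [hC]
      push_cast [Complex.ofReal_sum]
      ring
    exact Complex.ofReal_injective hgoal
  -- JR : rewrite of J
  have JR : ∀ q : ℤ × ℤ → ℝ, (∀ k, q k = q (-k)) →
      J q = (1 / ((N₁ : ℝ) * (N₂ : ℝ))) *
        ∑ ℓ ∈ G, (Ψ ℓ * Real.log (Ψ ℓ / Qv q ℓ) + Φo ℓ * Qv q ℓ) := by
    intro q hsym
    rw [hJ q, key q hsym, ← mul_add, ← Finset.sum_add_distrib]
  -- Convexity of B
  have convexB : Convex ℝ B := by
    rw [hB]
    intro q hq q' hq' a b ha hb hab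
    obtain ⟨hs, hsup, hpos⟩ := hq
    obtain ⟨hs', hsup', hpos'⟩ := hq'
    refine ⟨fun k => ?_, fun k hk => ?_, fun ℓ hℓ => ?_⟩
    · simp only [Pi.add_apply, Pi.smul_apply, smul_eq_mul, hs k, hs' k]
    · simp only [Pi.add_apply, Pi.smul_apply, smul_eq_mul, hsup k hk, hsup' k hk,
        mul_zero, add_zero]
    · rw [F5]
      exact combo_pos ha hb hab (hpos ℓ hℓ) (hpos' ℓ hℓ)
  have scvx : StrictConvexOn ℝ B J := by
    refine ⟨convexB, ?_⟩
    intro q hq q' hq' hne a b ha hb hab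
    rw [hB] at hq hq'
    obtain ⟨hs, hsup, hpos⟩ := hq
    obtain ⟨hs', hsup', hpos'⟩ := hq'
    have hsmid : ∀ k, (a • q + b • q') k = (a • q + b • q') (-k) := by
      intro k
      simp only [Pi.add_apply, Pi.smul_apply, smul_eq_mul, hs k, hs' k]
    obtain ⟨ℓ₀, hℓ₀G, hℓ₀⟩ : ∃ ℓ₀ ∈ G, Qv q ℓ₀ ≠ Qv q' ℓ₀ := by
      by_contra hcon
      push_neg at hcon
      exact hne (F3 q q' hs hsup hs' hsup' hcon)
    have hsum : ∑ ℓ ∈ G, (Ψ ℓ * Real.log (Ψ ℓ / Qv (a • q + b • q') ℓ)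
          + Φo ℓ * Qv (a • q + b • q') ℓ)
        < ∑ ℓ ∈ G, (a * (Ψ ℓ * Real.log (Ψ ℓ / Qv q ℓ) + Φo ℓ * Qv q ℓ)
          + b * (Ψ ℓ * Real.log (Ψ ℓ / Qv q' ℓ) + Φo ℓ * Qv q' ℓ)) := by
      refine Finset.sum_lt_sum (fun ℓ hℓ => ?_) ⟨ℓ₀, hℓ₀G, ?_⟩
      · rw [F5]
        rcases eq_or_ne (Qv q ℓ) (Qv q' ℓ) with he | he
        · exact (Hle (hΨ ℓ hℓ) _ _ a b (hpos ℓ hℓ) (hpos' ℓ hℓ) ha.le hb.le hab)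
        · exact (Hlt (hΨ ℓ hℓ) _ _ a b (hpos ℓ hℓ) (hpos' ℓ hℓ) ha hb hab he).le
      · rw [F5]
        exact Hlt (hΨ ℓ₀ hℓ₀G) _ _ a b (hpos ℓ₀ hℓ₀G) (hpos' ℓ₀ hℓ₀G) ha hb hab hℓ₀
    have hre : ∑ ℓ ∈ G, (a * (Ψ ℓ * Real.log (Ψ ℓ / Qv q ℓ) + Φo ℓ * Qv q ℓ)
          + b * (Ψ ℓ * Real.log (Ψ ℓ / Qv q' ℓ) + Φo ℓ * Qv q' ℓ))
        = a * ∑ ℓ ∈ G, (Ψ ℓ * Real.log (Ψ ℓ / Qv q ℓ) + Φo ℓ * Qv q ℓ)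
          + b * ∑ ℓ ∈ G, (Ψ ℓ * Real.log (Ψ ℓ / Qv q' ℓ) + Φo ℓ * Qv q' ℓ) := by
      rw [Finset.sum_add_distrib, ← Finset.mul_sum, ← Finset.mul_sum]
    rw [JR q hs, JR q' hs', JR _ hsmid, smul_eq_mul, smul_eq_mul]
    calc (1 / ((N₁ : ℝ) * (N₂ : ℝ))) * ∑ ℓ ∈ G, (Ψ ℓ * Real.log (Ψ ℓ / Qv (a • q + b • q') ℓ)
            + Φo ℓ * Qv (a • q + b • q') ℓ)
        < (1 / ((N₁ : ℝ) * (N₂ : ℝ))) *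
            ∑ ℓ ∈ G, (a * (Ψ ℓ * Real.log (Ψ ℓ / Qv q ℓ) + Φo ℓ * Qv q ℓ)
              + b * (Ψ ℓ * Real.log (Ψ ℓ / Qv q' ℓ) + Φo ℓ * Qv q' ℓ)) :=
          mul_lt_mul_of_pos_left hsum hNRinv
      _ = a * ((1 / ((N₁ : ℝ) * (N₂ : ℝ))) *
            ∑ ℓ ∈ G, (Ψ ℓ * Real.log (Ψ ℓ / Qv q ℓ) + Φo ℓ * Qv q ℓ))
          + b * ((1 / ((N₁ : ℝ) * (N₂ : ℝ))) *
            ∑ ℓ ∈ G, (Ψ ℓ * Real.log (Ψ ℓ / Qv q' ℓ) + Φo ℓ * Qv q' ℓ)) := by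
          rw [hre]; ring
  refine ⟨scvx, ?_⟩
  -- the reference point
  set q₀ : ℤ × ℤ → ℝ := fun k => if k = 0 then 1 else 0 with hq₀def
  have hQvq₀ : ∀ ℓ, Qv q₀ ℓ = 1 := by
    intro ℓ
    rw [hQv]
    have hzero : ζ 0 ℓ = 1 := by
      rw [hζ]
      simp
    rw [Finset.sum_eq_single (0 : ℤ × ℤ)
      (fun k _ hk => by simp [hq₀def, hk])
      (fun h => absurd h0Λ h)]
    simp [hq₀def, hzero]
  have hq₀B : q₀ ∈ B := by
    rw [hB]
    refine ⟨fun k => ?_, fun k hk => ?_, fun ℓ _ => by rw [hQvq₀]; norm_num⟩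
    · simp only [hq₀def, neg_eq_zero]
    · have : k ≠ 0 := fun h => hk (h ▸ h0Λ)
      simp [hq₀def, this]
  -- lower bound function and threshold
  set Lb : ℕ × ℕ → ℝ := fun ℓ => Ψ ℓ * Real.log (Φo ℓ) + Ψ ℓ with hLbdef
  set M : ℝ := J q₀ with hMdef
  set T : ℕ × ℕ → ℝ := fun ℓ =>
    ((N₁ : ℝ) * (N₂ : ℝ)) * M - ∑ ℓ' ∈ G, Lb ℓ' + Lb ℓ with hTdef
  have hLb : ∀ ℓ ∈ G, ∀ x : ℝ, 0 < x → Lb ℓ ≤ Ψ ℓ * Real.log (Ψ ℓ / x) + Φo ℓ * x := by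
    intro ℓ hℓ x hx
    exact Hlb (hΨ ℓ hℓ) (hΦo ℓ hℓ) hx
  -- choice of thresholds
  have hout : ∀ ℓ : ℕ × ℕ, ∃ p : ℝ × ℝ, 0 < p.1 ∧ p.1 ≤ 1 ∧ 1 ≤ p.2 ∧
      (ℓ ∈ G → ∀ x : ℝ, 0 < x → (x < p.1 ∨ p.2 < x) →
        T ℓ < Ψ ℓ * Real.log (Ψ ℓ / x) + Φo ℓ * x) := by
    intro ℓ
    by_cases hℓ : ℓ ∈ G
    · have h0 := (Hzero (hΨ ℓ hℓ) (hΦo ℓ hℓ)).eventually (eventually_gt_atTop (T ℓ))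
      have htp := (Htop (hΨ ℓ hℓ) (hΦo ℓ hℓ)).eventually (eventually_gt_atTop (T ℓ))
      obtain ⟨u, hu, hsub⟩ := mem_nhdsGT_iff_exists_Ioo_subset.mp h0
      obtain ⟨R0, hR0⟩ := eventually_atTop.mp htp
      refine ⟨(min u 1, max R0 1), lt_min (Set.mem_Ioi.mp hu) one_pos, min_le_right _ _,
        le_max_right _ _, fun _ x hx hcase => ?_⟩
      rcases hcase with hlt | hgt
      · exact hsub ⟨hx, lt_of_lt_of_le hlt (min_le_left _ _)⟩
      · exact hR0 x (le_of_lt (lt_of_le_of_lt (le_max_left _ _) hgt))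
    · exact ⟨(1, 1), one_pos, le_refl _, le_refl _, fun h => absurd h hℓ⟩
  choose p hp1 hp2 hp3 hp4 using hout
  set δ : ℝ := G.inf' hGne (fun ℓ => (p ℓ).1) with hδdef
  set R : ℝ := G.sup' hGne (fun ℓ => (p ℓ).2) with hRdef
  have hδpos : 0 < δ := (Finset.lt_inf'_iff hGne).mpr fun ℓ _ => hp1 ℓ
  have hδ1 : δ ≤ 1 := le_trans (Finset.inf'_le _ hGne.choose_spec) (hp2 _)
  have hR1 : 1 ≤ R := le_trans (hp3 _) (Finset.le_sup' (fun ℓ => (p ℓ).2) hGne.choose_spec)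
  have hδℓ : ∀ ℓ ∈ G, δ ≤ (p ℓ).1 := fun ℓ hℓ => Finset.inf'_le _ hℓ
  have hRℓ : ∀ ℓ ∈ G, (p ℓ).2 ≤ R := by
    intro ℓ hℓ
    rw [hRdef]
    exact Finset.le_sup' (fun ℓ => (p ℓ).2) hℓ
  -- the compact set K
  set K : Set (ℤ × ℤ → ℝ) := {q | (∀ k, q k = q (-k)) ∧ (∀ k ∉ Λ, q k = 0) ∧
    ∀ ℓ ∈ G, Qv q ℓ ∈ Set.Icc δ R} with hKdef
  have hKB : K ⊆ B := by
    intro q hq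
    rw [hB]
    exact ⟨hq.1, hq.2.1, fun ℓ hℓ => lt_of_lt_of_le hδpos (hq.2.2 ℓ hℓ).1⟩
  have hq₀K : q₀ ∈ K := by
    refine ⟨?_, ?_, fun ℓ _ => by rw [hQvq₀]; exact ⟨hδ1, hR1⟩⟩
    · intro k; simp only [hq₀def, neg_eq_zero]
    · intro k hk
      have : k ≠ 0 := fun h => hk (h ▸ h0Λ)
      simp [hq₀def, this]
  -- continuity of Qv
  have hQvcont : ∀ ℓ, Continuous fun q : ℤ × ℤ → ℝ => Qv q ℓ := by
    intro ℓ
    have : (fun q : ℤ × ℤ → ℝ => Qv q ℓ)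
        = fun q => (∑ k ∈ Λ, (q k : ℂ) * ζ k ℓ).re := by
      funext q; rw [hQv]
    rw [this]
    exact Complex.continuous_re.comp (continuous_finset_sum _ fun k _ =>
      (Complex.continuous_ofReal.comp (continuous_apply k)).mul continuous_const)
  -- K is compact
  have hKclosed : IsClosed K := by
    have : K = (⋂ (k : ℤ × ℤ), {q : ℤ × ℤ → ℝ | q k = q (-k)})
        ∩ ((⋂ (k : ℤ × ℤ) (_ : k ∉ Λ), {q : ℤ × ℤ → ℝ | q k = 0})
        ∩ (⋂ (ℓ : ℕ × ℕ) (_ : ℓ ∈ G), {q : ℤ × ℤ → ℝ | Qv q ℓ ∈ Set.Icc δ R})) := by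
      ext q
      simp only [hKdef, Set.mem_setOf_eq, Set.mem_inter_iff, Set.mem_iInter]
    rw [this]
    refine IsClosed.inter (isClosed_iInter fun k =>
      isClosed_eq (continuous_apply k) (continuous_apply (-k))) (IsClosed.inter ?_ ?_)
    · exact isClosed_iInter fun k => isClosed_iInter fun _ =>
        isClosed_eq (continuous_apply k) continuous_const
    · exact isClosed_iInter fun ℓ => isClosed_iInter fun _ =>
        IsClosed.preimage (hQvcont ℓ) isClosed_Icc
  have hKcompact : IsCompact K := by
    have hsubset : K ⊆ Set.pi Set.univ (fun _ : ℤ × ℤ => Set.Icc (-R) R) := by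
      intro q hq k _
      have hb : |q k| ≤ R := by
        refine F4 q hq.1 hq.2.1 R (le_trans zero_le_one hR1) (fun ℓ hℓ => ?_) k
        have := hq.2.2 ℓ hℓ
        rw [abs_le]
        exact ⟨le_trans (neg_nonpos_of_nonneg (le_trans zero_le_one hR1))
          (le_trans hδpos.le this.1), this.2⟩
      exact abs_le.mp hb
    exact IsCompact.of_isClosed_subset (isCompact_univ_pi fun _ => isCompact_Icc)
      hKclosed hsubset
  -- continuity of J on K
  have hJcont : ContinuousOn J K := by
    have hfun : J = fun q => (1 / ((N₁ : ℝ) * (N₂ : ℝ))) *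
        ∑ ℓ ∈ G, Ψ ℓ * Real.log (Ψ ℓ / Qv q ℓ) + ∑ k ∈ Λ, q k * c k := funext hJ
    rw [hfun]
    refine ContinuousOn.add (ContinuousOn.mul continuousOn_const ?_)
      (Continuous.continuousOn (continuous_finset_sum _ fun k _ =>
        (continuous_apply k).mul continuous_const))
    refine continuousOn_finset_sum _ fun ℓ hℓ => ContinuousOn.mul continuousOn_const ?_
    have hQvne : ∀ q ∈ K, Qv q ℓ ≠ 0 := fun q hq =>
      (lt_of_lt_of_le hδpos (hq.2.2 ℓ hℓ).1).ne'
    refine ContinuousOn.log ?_ ?_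
    · exact ContinuousOn.div continuousOn_const (Continuous.continuousOn (hQvcont ℓ)) hQvne
    · intro q hq
      exact (div_pos (hΨ ℓ hℓ) (lt_of_lt_of_le hδpos (hq.2.2 ℓ hℓ).1)).ne'
  -- minimizer over K
  obtain ⟨qh, hqhK, hqhmin⟩ := hKcompact.exists_isMinOn ⟨q₀, hq₀K⟩ hJcont
  have hqhB : qh ∈ B := hKB hqhK
  have hqhq₀ : J qh ≤ M := hqhmin hq₀K
  -- global minimality
  have hglobal : ∀ q ∈ B, J qh ≤ J q := by
    intro q hqB
    by_cases hqK : q ∈ K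
    · exact hqhmin hqK
    · have hqB' := hqB
      rw [hB] at hqB'
      obtain ⟨hs, hsup, hpos⟩ := hqB'
      obtain ⟨ℓs, hℓsG, hℓs⟩ : ∃ ℓ ∈ G, Qv q ℓ ∉ Set.Icc δ R := by
        by_contra hcon
        push_neg at hcon
        exact hqK ⟨hs, hsup, hcon⟩
      have hxs : 0 < Qv q ℓs := hpos ℓs hℓsG
      have hcase : Qv q ℓs < (p ℓs).1 ∨ (p ℓs).2 < Qv q ℓs := by
        rw [Set.mem_Icc, not_and_or] at hℓs
        push_neg at hℓs
        rcases hℓs with h | h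
        · exact Or.inl (lt_of_lt_of_le h (hδℓ ℓs hℓsG))
        · exact Or.inr (lt_of_le_of_lt (hRℓ ℓs hℓsG) h)
      have hTs : T ℓs < Ψ ℓs * Real.log (Ψ ℓs / Qv q ℓs) + Φo ℓs * Qv q ℓs :=
        hp4 ℓs hℓsG (Qv q ℓs) hxs hcase
      have hJq : M < J q := by
        rw [JR q hs]
        have hsum : ((N₁ : ℝ) * (N₂ : ℝ)) * M
            < ∑ ℓ ∈ G, (Ψ ℓ * Real.log (Ψ ℓ / Qv q ℓ) + Φo ℓ * Qv q ℓ) := by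
          have hrest : ∑ ℓ' ∈ G, Lb ℓ' - Lb ℓs
              ≤ ∑ ℓ ∈ G.erase ℓs, (Ψ ℓ * Real.log (Ψ ℓ / Qv q ℓ) + Φo ℓ * Qv q ℓ) := by
            rw [← Finset.sum_erase_eq_sub hℓsG]
            refine Finset.sum_le_sum fun ℓ hℓ => ?_
            have hℓG : ℓ ∈ G := Finset.mem_of_mem_erase hℓ
            exact hLb ℓ hℓG (Qv q ℓ) (hpos ℓ hℓG)
          have hsplit : ∑ ℓ ∈ G, (Ψ ℓ * Real.log (Ψ ℓ / Qv q ℓ) + Φo ℓ * Qv q ℓ)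
              = (Ψ ℓs * Real.log (Ψ ℓs / Qv q ℓs) + Φo ℓs * Qv q ℓs)
                + ∑ ℓ ∈ G.erase ℓs, (Ψ ℓ * Real.log (Ψ ℓ / Qv q ℓ) + Φo ℓ * Qv q ℓ) :=
            (Finset.add_sum_erase _ _ hℓsG).symm
          rw [hsplit]
          have := hTs
          rw [hTdef] at this
          simp only at this
          linarith
        calc M = (1 / ((N₁ : ℝ) * (N₂ : ℝ))) * (((N₁ : ℝ) * (N₂ : ℝ)) * M) := by
              field_simp
          _ < (1 / ((N₁ : ℝ) * (N₂ : ℝ))) *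
              ∑ ℓ ∈ G, (Ψ ℓ * Real.log (Ψ ℓ / Qv q ℓ) + Φo ℓ * Qv q ℓ) :=
              mul_lt_mul_of_pos_left hsum hNRinv
      exact le_of_lt (lt_of_le_of_lt hqhq₀ hJq)
  -- the unique minimizer
  refine ⟨qh, ⟨hqhB, hglobal, fun ℓ hℓ => ?_⟩, ?_⟩
  · have : 0 < Qv qh ℓ := by
      rw [hB] at hqhB
      exact hqhB.2.2 ℓ hℓ
    exact div_pos (hΨ ℓ hℓ) this
  · rintro q' ⟨hq'B, hq'min, -⟩
    by_contra hne
    have hJeq : J q' = J qh := le_antisymm (hq'min qh hqhB) (hglobal q' hq'B)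
    have hmidB : (1/2 : ℝ) • q' + (1/2 : ℝ) • qh ∈ B :=
      convexB hq'B hqhB (by norm_num) (by norm_num) (by norm_num)
    have hlt := scvx.2 hq'B hqhB hne (by norm_num : (0:ℝ) < 1/2)
      (by norm_num : (0:ℝ) < 1/2) (by norm_num)
    rw [smul_eq_mul, smul_eq_mul, hJeq] at hlt
    have : J ((1/2 : ℝ) • q' + (1/2 : ℝ) • qh) < J qh := by linarith
    have hge := hq'min _ hmidB
    rw [hJeq] at hge
    linarith
end
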